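/- Suppose K ⊆ L are subgroups of G, K is above [H]^𝒪, and g ∈ G is such that K_g^H = K ∩ gHg⁻¹ lies in [H]^𝒪. Then L_g^H = L ∩ gHg⁻¹ also lies in [H]^𝒪, and L_g^H is the unique element of T_{L ≥ [H]^𝒪} = {L ∩ aHa⁻¹ : a ∈ G, L ∩ aHa⁻¹ ∈ [H]^𝒪} containing K_g^H. -/

import Mathlib

/-- A transfer system on a group `G`: a partial order `rel` on subgroups refining the
subgroup relation, closed under conjugation and restriction. -/
structure TransferSystem (G : Type*) [Group G] where
  rel : Subgroup G → Subgroup G → Prop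
  le_of_rel : ∀ {K H : Subgroup G}, rel K H → K ≤ H
  refl : ∀ H : Subgroup G, rel H H
  trans : ∀ {J K H : Subgroup G}, rel J K → rel K H → rel J H
  antisymm : ∀ {K H : Subgroup G}, rel K H → rel H K → K = H
  conj : ∀ (g : G) {K H : Subgroup G}, rel K H →
    rel (K.map (MulAut.conj g).toMonoidHom) (H.map (MulAut.conj g).toMonoidHom)
  restrict : ∀ {K H L : Subgroup G}, rel K H → L ≤ H → rel (K ⊓ L) L

/-- Conjugate subgroup `gKg⁻¹`. -/
def conjSub {G : Type*} [Group G] (g : G) (K : Subgroup G) : Subgroup G :=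
  K.map (MulAut.conj g).toMonoidHom

/-- `H_𝒪(J)`: the minimal subgroup containing `J` which transfers to `G` (the top subgroup). -/
noncomputable def HO {G : Type*} [Group G] (O : TransferSystem G) (J : Subgroup G) : Subgroup G :=
  sInf {H : Subgroup G | O.rel H ⊤ ∧ J ≤ H}

/-- `J ∈ [H]^𝒪`: the inseparability class of `H`, i.e. `H_𝒪(J)` is conjugate to `H`. -/
def inClass {G : Type*} [Group G] (O : TransferSystem G) (H J : Subgroup G) : Prop :=
  ∃ g : G, conjSub g (HO O J) = H

/-- `J` and `K` are 𝒪-inseparable: `H_𝒪(J)` and `H_𝒪(K)` are conjugate. -/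
def TSInseparable {G : Type*} [Group G] (O : TransferSystem G) (J K : Subgroup G) : Prop :=
  ∃ g : G, conjSub g (HO O J) = HO O K


section Aux
variable {G : Type*} [Group G]

lemma conjSub_conjSub (a b : G) (K : Subgroup G) :
    conjSub a (conjSub b K) = conjSub (a * b) K := by
  simp only [conjSub, Subgroup.map_map]
  congr 1
  ext x
  simp [mul_assoc]

lemma conjSub_one (K : Subgroup G) : conjSub 1 K = K := by
  simp only [conjSub]
  ext x; simp

lemma conjSub_top (g : G) : conjSub g (⊤ : Subgroup G) = ⊤ :=
  Subgroup.map_top_of_surjective _ (MulAut.conj g).surjective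

lemma conjSub_card (g : G) (K : Subgroup G) : Nat.card (conjSub g K) = Nat.card K :=
  (Nat.card_congr ((MulAut.conj g).subgroupMap K).toEquiv).symm

variable (O : TransferSystem G)

lemma rel_conjSub_top {H : Subgroup G} (h : O.rel H ⊤) (g : G) : O.rel (conjSub g H) ⊤ := by
  have := O.conj g h
  rwa [show (⊤ : Subgroup G).map (MulAut.conj g).toMonoidHom = ⊤ from conjSub_top g] at this

variable [Finite G]

lemma HO_mem (J : Subgroup G) : O.rel (HO O J) ⊤ ∧ J ≤ HO O J := by
  set S : Set (Subgroup G) := {H : Subgroup G | O.rel H ⊤ ∧ J ≤ H} with hS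
  have hne : S.Nonempty := ⟨⊤, O.refl ⊤, le_top⟩
  obtain ⟨M, hM, hmin⟩ := Set.Finite.exists_minimalFor id S (Set.toFinite S) hne
  have hle : ∀ H' ∈ S, M ≤ H' := by
    intro H' hH'
    have hinf : M ⊓ H' ∈ S := by
      refine ⟨O.trans (O.restrict hM.1 (O.le_of_rel hH'.1)) hH'.1, le_inf hM.2 hH'.2⟩
    have := hmin hinf (inf_le_left)
    simp only [id] at this
    exact this.trans inf_le_right
  have : HO O J = M := le_antisymm (sInf_le hM) (le_sInf hle)
  rw [this]; exact hM

lemma HO_le {J H' : Subgroup G} (h1 : O.rel H' ⊤) (h2 : J ≤ H') : HO O J ≤ H' :=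
  sInf_le ⟨h1, h2⟩

lemma HO_mono {J J' : Subgroup G} (h : J ≤ J') : HO O J ≤ HO O J' :=
  sInf_le_sInf (fun _ hx => ⟨hx.1, h.trans hx.2⟩)

/-- Key: if J in class of H, J ≤ H', rel H' ⊤, card H' = card H, then HO J = H'. -/
lemma HO_eq {H J H' : Subgroup G} (hJ : inClass O H J) (h1 : O.rel H' ⊤) (h2 : J ≤ H')
    (hcard : Nat.card H' = Nat.card H) : HO O J = H' := by
  obtain ⟨b, hb⟩ := hJ
  have hcard2 : Nat.card (HO O J) = Nat.card H := by
    rw [← hb, conjSub_card]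
  exact Subgroup.eq_of_le_of_card_ge (HO_le O h1 h2) (by rw [hcard, hcard2])

end Aux

/-- If `K ≤ L`, `K` is above the class of `H`, and `K ⊓ gHg⁻¹` lies in the class, then
`L ⊓ gHg⁻¹` lies in the class and is the unique member of
`{L ⊓ aHa⁻¹ : a ∈ G} ∩ [H]^𝒪` containing `K ⊓ gHg⁻¹`. -/
theorem class_intersection_functorial {G : Type*} [Group G] [Finite G] (O : TransferSystem G)
    {H K L : Subgroup G} (hH : O.rel H ⊤) (hKL : K ≤ L)
    (habove : ∃ J : Subgroup G, inClass O H J ∧ J ≤ K) (g : G)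
    (hKg : inClass O H (K ⊓ conjSub g H)) :
    inClass O H (L ⊓ conjSub g H) ∧
    ∀ a : G, inClass O H (L ⊓ conjSub a H) → K ⊓ conjSub g H ≤ L ⊓ conjSub a H →
      L ⊓ conjSub a H = L ⊓ conjSub g H := by
  have hgH : O.rel (conjSub g H) ⊤ := rel_conjSub_top O hH g
  have hKeq : HO O (K ⊓ conjSub g H) = conjSub g H :=
    HO_eq O hKg hgH inf_le_right (conjSub_card g H)
  have hLg : HO O (L ⊓ conjSub g H) = conjSub g H := by
    refine le_antisymm (HO_le O hgH inf_le_right) ?_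
    calc conjSub g H = HO O (K ⊓ conjSub g H) := hKeq.symm
      _ ≤ HO O (L ⊓ conjSub g H) := HO_mono O (inf_le_inf_right _ hKL)
  constructor
  · exact ⟨g⁻¹, by rw [hLg, conjSub_conjSub, inv_mul_cancel, conjSub_one]⟩
  · intro a ha hle
    have haH : O.rel (conjSub a H) ⊤ := rel_conjSub_top O hH a
    have haeq : HO O (L ⊓ conjSub a H) = conjSub a H :=
      HO_eq O ha haH inf_le_right (conjSub_card a H)
    have hga : conjSub g H ≤ conjSub a H := by
      calc conjSub g H = HO O (K ⊓ conjSub g H) := hKeq.symm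
        _ ≤ HO O (L ⊓ conjSub a H) := HO_mono O hle
        _ = conjSub a H := haeq
    have : conjSub g H = conjSub a H :=
      Subgroup.eq_of_le_of_card_ge hga (by rw [conjSub_card, conjSub_card])
    rw [this]
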